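/- Let Γ be a rooted digraph satisfying P0, P1, P2 and P3, and let A = Aut(Γ). Then there is a system Ω = {ω_1, …, ω_s} of blocks of imprimitivity for the action of A on the first level Γ^1(α), with s ≥ 2, such that desc(ω_i) ∩ desc(ω_j) = ∅ whenever i ≠ j. -/

import Mathlib

variable {V : Type*}

/-- Directed walks of length `n` (`n`-arcs). -/
def arcOf (E : V → V → Prop) : ℕ → V → V → Prop
  | 0 => fun x y => x = y
  | n + 1 => fun x y => ∃ z, E x z ∧ arcOf E n z y

/-- Vertices reachable from `x` by a directed path of length exactly `n`. -/
def descN (E : V → V → Prop) (n : ℕ) (x : V) : Set V := {y | arcOf E n x y}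

/-- The descendant set of `x` (including `x` itself). -/
def desc (E : V → V → Prop) (x : V) : Set V := {y | ∃ n, arcOf E n x y}

theorem self_mem_desc (E : V → V → Prop) (x : V) : x ∈ desc E x := ⟨0, by simp [arcOf]⟩

def descSet (E : V → V → Prop) (S : Set V) : Set V := ⋃ x ∈ S, desc E x

theorem self_mem_descSet (E : V → V → Prop) {S : Set V} {x : V} (hx : x ∈ S) :
    x ∈ descSet E S := Set.mem_biUnion hx (self_mem_desc E x)

def outSet (E : V → V → Prop) (x : V) : Set V := {y | E x y}

def inSet (E : V → V → Prop) (x : V) : Set V := {y | E y x}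

def IsAut (E : V → V → Prop) (g : Equiv.Perm V) : Prop := ∀ x y, E x y ↔ E (g x) (g y)

def Rooted (E : V → V → Prop) (α : V) : Prop := ∀ y, y ∈ desc E α

def P0 (E : V → V → Prop) (α : V) (m : ℕ) : Prop :=
  0 < m ∧ (∀ x, (outSet E x).Finite ∧ (outSet E x).ncard = m) ∧
    ∀ s t : ℕ, s ≠ t → Disjoint (descN E s α) (descN E t α)

def P1 (E : V → V → Prop) : Prop :=
  ∀ u : V, ∃ f : desc E u ≃ V, ∀ x y : desc E u, (E x.1 y.1 ↔ E (f x) (f y))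

def P2 (E : V → V → Prop) (α : V) : Prop :=
  ∀ i : ℕ, ∀ x ∈ descN E i α, ∀ y ∈ descN E i α,
    ∃ g : Equiv.Perm V, IsAut E g ∧ g α = α ∧ g x = y

def P3 (E : V → V → Prop) (α : V) : Prop :=
  ∀ i : ℕ, (descN E i α).ncard < (descN E (i + 1) α).ncard

def EdgeTrans (E : V → V → Prop) : Prop :=
  ∀ a b c d : V, E a b → E c d → ∃ g : Equiv.Perm V, IsAut E g ∧ g a = c ∧ g b = d

def VertexTrans (E : V → V → Prop) : Prop :=
  ∀ u v : V, ∃ g : Equiv.Perm V, IsAut E g ∧ g u = v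

def NoDirectedCycles (E : V → V → Prop) : Prop :=
  ∀ s : ℕ, 1 ≤ s → ∀ x : V, ¬ arcOf E s x x

def HasPropZ {W : Type*} (E : W → W → Prop) : Prop :=
  ∃ f : W → ℤ, Function.Surjective f ∧ ∀ x y : W, E x y → f y = f x + 1

def deltaSetoid (E : V → V → Prop) (n : ℕ) : Setoid V :=
  ⟨fun u v => descN E n u = descN E n v, ⟨fun _ => rfl, Eq.symm, Eq.trans⟩⟩

def QEdge (E : V → V → Prop) (n : ℕ)
    (A B : Quotient (deltaSetoid E n)) : Prop :=
  ∃ a b : V, Quotient.mk (deltaSetoid E n) a = A ∧ Quotient.mk (deltaSetoid E n) b = B ∧ E a b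

def cls (E : V → V → Prop) (n : ℕ) (v : V) : Set V := {u | descN E n u = descN E n v}

def QEdgeSet (E : V → V → Prop) (A B : Set V) : Prop := ∃ a ∈ A, ∃ b ∈ B, E a b

def WDH (E : V → V → Prop) : Prop :=
  VertexTrans E ∧
  ∀ (X Y : Finset V) (f : descSet E (↑X : Set V) ≃ descSet E (↑Y : Set V)),
    (∀ a b : descSet E (↑X : Set V), (E a.1 b.1 ↔ E (f a).1 (f b).1)) →
    ∃ g : Equiv.Perm V, IsAut E g ∧
      ∀ (x : V) (hx : x ∈ X), g x = (f ⟨x, self_mem_descSet E (by exact_mod_cast hx)⟩).1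

def EdgeT (E : V → V → Prop) := {p : V × V // E p.1 p.2}

def reachSetoid (E : V → V → Prop) : Setoid (EdgeT E) :=
  ⟨Relation.EqvGen (fun a b => a.1.1 = b.1.1 ∨ a.1.2 = b.1.2),
    Relation.EqvGen.is_equivalence _⟩

def AlSources (E : V → V → Prop) (A : Quotient (reachSetoid E)) : Set V :=
  {v | ∃ e : EdgeT E, Quotient.mk (reachSetoid E) e = A ∧ v = e.1.1}

def AlSinks (E : V → V → Prop) (A : Quotient (reachSetoid E)) : Set V :=
  {v | ∃ e : EdgeT E, Quotient.mk (reachSetoid E) e = A ∧ v = e.1.2}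

def AlEdge (E : V → V → Prop) (A B : Quotient (reachSetoid E)) : Prop :=
  ∃ v, v ∈ AlSinks E A ∧ v ∈ AlSources E B


section BlockAux

variable {E : V → V → Prop} {α : V} {m : ℕ}

lemma arcOf_snoc : ∀ {n : ℕ} {x y : V}, arcOf E (n+1) x y ↔ ∃ z, arcOf E n x z ∧ E z y := by
  intro n
  induction n with
  | zero =>
    intro x y
    constructor
    · rintro ⟨z, hxz, hz⟩
      exact ⟨x, rfl, by have h : z = y := hz; rwa [h] at hxz⟩
    · rintro ⟨z, hz, hzy⟩
      have h : x = z := hz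
      exact ⟨y, by rwa [h], rfl⟩
  | succ n ih =>
    intro x y
    constructor
    · rintro ⟨z, hxz, hz⟩
      obtain ⟨w, hw, hwy⟩ := ih.mp hz
      exact ⟨w, ⟨z, hxz, hw⟩, hwy⟩
    · rintro ⟨w, ⟨z, hxz, hw⟩, hwy⟩
      exact ⟨z, hxz, ih.mpr ⟨w, hw, hwy⟩⟩

lemma arcOf_trans : ∀ {a b : ℕ} {x y z : V}, arcOf E a x y → arcOf E b y z →
    arcOf E (a + b) x z := by
  intro a
  induction a with
  | zero =>
    intro b x y z h1 h2
    have h : x = y := h1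
    rw [Nat.zero_add, h]; exact h2
  | succ a ih =>
    intro b x y z h1 h2
    obtain ⟨w, hxw, hw⟩ := h1
    rw [Nat.succ_add]
    exact ⟨w, hxw, ih hw h2⟩

noncomputable def levF (hroot : Rooted E α) (x : V) : ℕ := (hroot x).choose

lemma lev_spec (hroot : Rooted E α) (x : V) : arcOf E (levF hroot x) α x :=
  (hroot x).choose_spec

lemma lev_eq (hroot : Rooted E α)
    (hd : ∀ s t : ℕ, s ≠ t → Disjoint (descN E s α) (descN E t α))
    {n : ℕ} {x : V} (h : arcOf E n α x) : n = levF hroot x := by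
  by_contra hne
  exact Set.disjoint_left.mp (hd _ _ hne) h (lev_spec hroot x)

lemma lev_edge (hroot : Rooted E α)
    (hd : ∀ s t : ℕ, s ≠ t → Disjoint (descN E s α) (descN E t α))
    {x y : V} (h : E x y) : levF hroot y = levF hroot x + 1 :=
  (lev_eq hroot hd (arcOf_snoc.mpr ⟨x, lev_spec hroot x, h⟩)).symm

lemma lev_desc (hroot : Rooted E α)
    (hd : ∀ s t : ℕ, s ≠ t → Disjoint (descN E s α) (descN E t α))
    {x y : V} {d : ℕ} (h : arcOf E d x y) : levF hroot y = levF hroot x + d :=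
  (lev_eq hroot hd (arcOf_trans (lev_spec hroot x) h)).symm

lemma lev_zero_iff (hroot : Rooted E α)
    (hd : ∀ s t : ℕ, s ≠ t → Disjoint (descN E s α) (descN E t α))
    {x : V} : levF hroot x = 0 ↔ x = α := by
  constructor
  · intro h
    have h2 := lev_spec hroot x
    rw [h] at h2
    exact (show α = x from h2).symm
  · intro h
    rw [h]
    exact (lev_eq hroot hd (show arcOf E 0 α α from rfl)).symm

lemma level_finite (hout : ∀ x : V, (outSet E x).Finite ∧ (outSet E x).ncard = m) :
    ∀ i, (descN E i α).Finite := by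
  intro i
  induction i with
  | zero =>
    apply (Set.finite_singleton α).subset
    intro y hy
    exact (show α = y from hy).symm ▸ rfl
  | succ i ih =>
    apply (ih.biUnion (fun x _ => (hout x).1)).subset
    intro y hy
    obtain ⟨z, hz, hzy⟩ := arcOf_snoc.mp hy
    exact Set.mem_biUnion hz hzy

lemma exists_arc (hne : ∀ x : V, ∃ y, E x y) : ∀ (n : ℕ) (x : V), ∃ y, arcOf E n x y := by
  intro n
  induction n with
  | zero => exact fun x => ⟨x, rfl⟩
  | succ n ih =>
    intro x
    obtain ⟨z, hz⟩ := hne x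
    obtain ⟨y, hy⟩ := ih z
    exact ⟨y, z, hz, hy⟩

lemma isAut_symm {g : Equiv.Perm V} (hg : IsAut E g) : IsAut E g.symm := by
  intro x y
  have h := hg (g.symm x) (g.symm y)
  rw [Equiv.apply_symm_apply, Equiv.apply_symm_apply] at h
  exact h.symm

lemma arcOf_aut {g : Equiv.Perm V} (hg : IsAut E g) :
    ∀ {n : ℕ} {x y : V}, arcOf E n x y → arcOf E n (g x) (g y) := by
  intro n
  induction n with
  | zero =>
    intro x y h
    exact congrArg g (h : x = y)
  | succ n ih =>
    rintro x y ⟨z, h1, h2⟩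
    exact ⟨g z, (hg x z).1 h1, ih h2⟩

def Uset (E : V → V → Prop) (α x : V) : Set V := {u | E α u ∧ x ∈ desc E u}

lemma Uset_mono {x y : V} (h : E y x) : Uset E α y ⊆ Uset E α x := by
  rintro u ⟨h1, n, hn⟩
  exact ⟨h1, n + 1, arcOf_snoc.mpr ⟨y, hn, h⟩⟩

lemma Uset_aut {g : Equiv.Perm V} (hg : IsAut E g) (hgα : g α = α) (x : V) :
    g '' Uset E α x = Uset E α (g x) := by
  ext v
  constructor
  · rintro ⟨u, ⟨hαu, n, hn⟩, rfl⟩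
    refine ⟨?_, n, arcOf_aut hg hn⟩
    have := (hg α u).1 hαu
    rwa [hgα] at this
  · rintro ⟨hαv, n, hn⟩
    refine ⟨g.symm v, ⟨?_, n, ?_⟩, g.apply_symm_apply v⟩
    · have := (isAut_symm hg α v).1 hαv
      rwa [show g.symm α = α from (Equiv.symm_apply_eq g).2 hgα.symm] at this
    · have := arcOf_aut (isAut_symm hg) hn
      rwa [Equiv.symm_apply_apply] at this

def Stp (E : V → V → Prop) (S : Set V) (a b : V) : Prop := (E a b ∨ E b a) ∧ a ∈ S ∧ b ∈ S

def JoinedG (E : V → V → Prop) (S : Set V) : V → V → Prop := Relation.ReflTransGen (Stp E S)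

lemma JoinedG.refl' {S : Set V} (a : V) : JoinedG E S a a := Relation.ReflTransGen.refl

lemma JoinedG_symm {S : Set V} {a b : V} (h : JoinedG E S a b) : JoinedG E S b a :=
  by
    haveI : Std.Symm (Stp E S) := ⟨fun _ _ h' => ⟨h'.1.symm, h'.2.2, h'.2.1⟩⟩
    exact Std.Symm.symm (r := Relation.ReflTransGen (Stp E S)) _ _ h

lemma JoinedG_trans {S : Set V} {a b c : V} (h1 : JoinedG E S a b) (h2 : JoinedG E S b c) :
    JoinedG E S a c := Relation.ReflTransGen.trans h1 h2

lemma JoinedG_mono {S T : Set V} (hST : S ⊆ T) {a b : V} (h : JoinedG E S a b) :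
    JoinedG E T a b := by
  refine Relation.ReflTransGen.mono ?_ _ _ h
  rintro p q ⟨h1, h2, h3⟩
  exact ⟨h1, hST h2, hST h3⟩

def SL (hroot : Rooted E α) (L : ℕ) : Set V := {z | L ≤ levF hroot z}

lemma joined_of_arc (hroot : Rooted E α)
    (hd : ∀ s t : ℕ, s ≠ t → Disjoint (descN E s α) (descN E t α)) :
    ∀ {n : ℕ} {x y : V}, arcOf E n x y → ∀ {L : ℕ}, L ≤ levF hroot x →
      JoinedG E (SL hroot L) x y := by
  intro n
  induction n with
  | zero =>
    intro x y h L _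
    rw [show x = y from h]
    exact Relation.ReflTransGen.refl
  | succ n ih =>
    rintro x y ⟨z, h1, h2⟩ L hx
    have hz : L ≤ levF hroot z := by
      rw [lev_edge hroot hd h1]; omega
    exact Relation.ReflTransGen.head ⟨Or.inl h1, hx, hz⟩ (ih h2 hz)

lemma SL_one_eq (hroot : Rooted E α)
    (hd : ∀ s t : ℕ, s ≠ t → Disjoint (descN E s α) (descN E t α)) :
    SL hroot 1 = {z : V | z ≠ α} := by
  ext z
  constructor
  · intro hz hza
    have : levF hroot z = 0 := (lev_zero_iff hroot hd).2 hza
    have hz' : 1 ≤ levF hroot z := hz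
    omega
  · intro hz
    have : levF hroot z ≠ 0 := fun h => hz ((lev_zero_iff hroot hd).1 h)
    show 1 ≤ levF hroot z
    omega

def omegaB (E : V → V → Prop) (α u : V) : Set V :=
  {v | E α v ∧ JoinedG E {z | z ≠ α} u v}

lemma omega_eq_of_joined {u v : V} (h : JoinedG E {z : V | z ≠ α} u v) :
    omegaB E α u = omegaB E α v := by
  ext w
  exact ⟨fun hw => ⟨hw.1, JoinedG_trans (JoinedG_symm h) hw.2⟩,
    fun hw => ⟨hw.1, JoinedG_trans h hw.2⟩⟩

lemma JoinedG_aut {g : Equiv.Perm V} (hg : IsAut E g) (hgα : g α = α) {a b : V}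
    (h : JoinedG E {z : V | z ≠ α} a b) : JoinedG E {z : V | z ≠ α} (g a) (g b) := by
  refine Relation.ReflTransGen.lift g ?_ _ _ h
  rintro p q ⟨h1, h2, h3⟩
  refine ⟨?_, ?_, ?_⟩
  · rcases h1 with h1 | h1
    · exact Or.inl ((hg p q).1 h1)
    · exact Or.inr ((hg q p).1 h1)
  · intro hh
    exact h2 (g.injective (by rw [hh, hgα]))
  · intro hh
    exact h3 (g.injective (by rw [hh, hgα]))

lemma eq_root_of_source (hroot : Rooted E α)
    (hd : ∀ s t : ℕ, s ≠ t → Disjoint (descN E s α) (descN E t α))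
    {w : V} (hs : ∀ z, ¬ E z w) : w = α := by
  rcases Nat.eq_zero_or_pos (levF hroot w) with h | h
  · exact (lev_zero_iff hroot hd).1 h
  · exfalso
    obtain ⟨j, hj⟩ := Nat.exists_eq_succ_of_ne_zero (Nat.pos_iff_ne_zero.mp h)
    have hsp := lev_spec hroot w
    rw [hj] at hsp
    obtain ⟨z, _, hz⟩ := arcOf_snoc.mp hsp
    exact hs z hz

lemma f_root (hroot : Rooted E α)
    (hd : ∀ s t : ℕ, s ≠ t → Disjoint (descN E s α) (descN E t α))
    {u : V} (f : desc E u ≃ V) (hf : ∀ x y : desc E u, E x.1 y.1 ↔ E (f x) (f y)) :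
    f ⟨u, self_mem_desc E u⟩ = α := by
  apply eq_root_of_source hroot hd
  intro z hz
  have h2 : E ((f.symm z) : V) u := by
    apply (hf (f.symm z) ⟨u, self_mem_desc E u⟩).2
    rwa [f.apply_symm_apply]
  obtain ⟨d, hd'⟩ := (f.symm z).2
  have e1 := lev_edge hroot hd h2
  have e2 := lev_desc hroot hd hd'
  omega

lemma ncard_descN_eq (hroot : Rooted E α)
    (hd : ∀ s t : ℕ, s ≠ t → Disjoint (descN E s α) (descN E t α))
    (h1 : P1 E) (u : V) (j : ℕ) :
    (descN E j u).ncard = (descN E j α).ncard := by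
  obtain ⟨f, hf⟩ := h1 u
  have hfr := f_root hroot hd f hf
  have hA : ∀ (j : ℕ) (x : V) (h : arcOf E j u x), arcOf E j α (f ⟨x, j, h⟩) := by
    intro j
    induction j with
    | zero =>
      intro x h
      have hx : u = x := h
      subst hx
      exact hfr.symm
    | succ j ih =>
      intro x h
      obtain ⟨z, hz, hzx⟩ := arcOf_snoc.mp h
      refine arcOf_snoc.mpr ⟨f ⟨z, j, hz⟩, ih z hz, ?_⟩
      exact (hf ⟨z, j, hz⟩ ⟨x, j + 1, h⟩).1 hzx
  have hB : ∀ (j : ℕ) (w : V), arcOf E j α w → ∃ x, ∃ h : arcOf E j u x, f ⟨x, j, h⟩ = w := by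
    intro j
    induction j with
    | zero =>
      intro w h
      obtain rfl : α = w := h
      exact ⟨u, rfl, hfr⟩
    | succ j ih =>
      intro w h
      obtain ⟨z, hz, hzw⟩ := arcOf_snoc.mp h
      obtain ⟨x, hx, hfx⟩ := ih z hz
      have hE : E x ((f.symm w) : V) := by
        apply (hf ⟨x, j, hx⟩ (f.symm w)).2
        rw [f.apply_symm_apply, hfx]
        exact hzw
      have hx' : arcOf E (j + 1) u ((f.symm w) : V) := arcOf_snoc.mpr ⟨x, hx, hE⟩
      refine ⟨(f.symm w : V), hx', ?_⟩
      have heq : (⟨(f.symm w : V), j + 1, hx'⟩ : desc E u) = f.symm w := Subtype.ext rfl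
      rw [heq, f.apply_symm_apply]
  classical
  set F : V → V := fun x => if h : x ∈ desc E u then f ⟨x, h⟩ else α with hFdef
  have hFval : ∀ (x : V) (h : x ∈ desc E u), F x = f ⟨x, h⟩ := fun x h => dif_pos h
  have hinj : Set.InjOn F (descN E j u) := by
    intro a ha b hb hab
    rw [hFval a ⟨j, ha⟩, hFval b ⟨j, hb⟩] at hab
    exact congrArg Subtype.val (f.injective hab)
  have himg : F '' (descN E j u) = descN E j α := by
    ext w
    constructor
    · rintro ⟨x, hx, rfl⟩
      rw [hFval x ⟨j, hx⟩]
      exact hA j x hx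
    · intro hw
      obtain ⟨x, hx, hfx⟩ := hB j w hw
      exact ⟨x, hx, by rw [hFval x ⟨j, hx⟩]; exact hfx⟩
  rw [← himg, Set.ncard_image_of_injOn hinj]

lemma transfer (hroot : Rooted E α)
    (hd : ∀ s t : ℕ, s ≠ t → Disjoint (descN E s α) (descN E t α))
    (h1 : P1 E)
    (H1 : ∀ u v : V, E α u → E α v → JoinedG E {z : V | z ≠ α} u v)
    {w c c' : V} (hc : E w c) (hc' : E w c') :
    JoinedG E {z | z ∈ desc E w ∧ z ≠ w} c c' := by
  obtain ⟨f, hf⟩ := h1 w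
  have hfr := f_root hroot hd f hf
  have hcw : c ∈ desc E w := ⟨1, c, hc, rfl⟩
  have hc'w : c' ∈ desc E w := ⟨1, c', hc', rfl⟩
  have h1c : E α (f ⟨c, hcw⟩) := by
    rw [← hfr]
    exact (hf ⟨w, self_mem_desc E w⟩ ⟨c, hcw⟩).1 hc
  have h1c' : E α (f ⟨c', hc'w⟩) := by
    rw [← hfr]
    exact (hf ⟨w, self_mem_desc E w⟩ ⟨c', hc'w⟩).1 hc'
  have hJ := H1 _ _ h1c h1c'
  have pull : ∀ a b : V, JoinedG E {z : V | z ≠ α} a b →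
      JoinedG E {z | z ∈ desc E w ∧ z ≠ w} ((f.symm a : V)) ((f.symm b : V)) := by
    intro a b hab
    refine Relation.ReflTransGen.lift (fun v => (f.symm v : V)) ?_ _ _ hab
    rintro p q ⟨hpq, hp, hq⟩
    have hval : ∀ r : V, r ≠ α → (f.symm r : V) ≠ w := by
      intro r hr hh
      apply hr
      have h3 : f.symm r = ⟨w, self_mem_desc E w⟩ := Subtype.ext hh
      have := congrArg f h3
      rwa [f.apply_symm_apply, hfr] at this
    refine ⟨?_, ⟨(f.symm p).2, hval p hp⟩, ⟨(f.symm q).2, hval q hq⟩⟩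
    rcases hpq with h | h
    · exact Or.inl ((hf (f.symm p) (f.symm q)).2
        (by rw [f.apply_symm_apply, f.apply_symm_apply]; exact h))
    · exact Or.inr ((hf (f.symm q) (f.symm p)).2
        (by rw [f.apply_symm_apply, f.apply_symm_apply]; exact h))
  have hres := pull _ _ hJ
  rw [f.symm_apply_apply, f.symm_apply_apply] at hres
  exact hres

lemma desc_ne_subset_SL (hroot : Rooted E α)
    (hd : ∀ s t : ℕ, s ≠ t → Disjoint (descN E s α) (descN E t α)) (w : V) :
    {z | z ∈ desc E w ∧ z ≠ w} ⊆ SL hroot (levF hroot w + 1) := by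
  rintro z ⟨⟨d, hdz⟩, hzw⟩
  have hlev := lev_desc hroot hd hdz
  have hd0 : d ≠ 0 := by
    rintro rfl
    exact hzw (show w = z from hdz).symm
  show levF hroot w + 1 ≤ levF hroot z
  omega

lemma surgery_step (hroot : Rooted E α)
    (hd : ∀ s t : ℕ, s ≠ t → Disjoint (descN E s α) (descN E t α))
    (h1 : P1 E)
    (H1 : ∀ u v : V, E α u → E α v → JoinedG E {z : V | z ≠ α} u v)
    (L : ℕ) {x y : V}
    (hp : JoinedG E (SL hroot L) x y) (hy : L + 1 ≤ levF hroot y) :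
    ∀ c : V, ((L + 1 ≤ levF hroot x ∧ c = x) ∨ (levF hroot x = L ∧ E x c)) →
      JoinedG E (SL hroot (L + 1)) c y := by
  induction hp using Relation.ReflTransGen.head_induction_on with
  | refl =>
    rintro c (⟨_, rfl⟩ | ⟨hxL, _⟩)
    · exact Relation.ReflTransGen.refl
    · omega
  | @head a b h' htail ih =>
    obtain ⟨hab, haS, hbS⟩ := h'
    have haS' : L ≤ levF hroot a := haS
    have hbS' : L ≤ levF hroot b := hbS
    rintro c (⟨hlev, hceq⟩ | ⟨hlevL, hEac⟩)
    · rw [hceq]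
      by_cases hb : L + 1 ≤ levF hroot b
      · exact Relation.ReflTransGen.head ⟨hab, hlev, hb⟩ (ih b (Or.inl ⟨hb, rfl⟩))
      · have hbL : levF hroot b = L := by omega
        have hEba : E b a := by
          rcases hab with h | h
          · exfalso
            have := lev_edge hroot hd h
            omega
          · exact h
        exact ih a (Or.inr ⟨hbL, hEba⟩)
    · have hEab : E a b := by
        rcases hab with h | h
        · exact h
        · exfalso
          have := lev_edge hroot hd h
          omega
      have hlevb : levF hroot b = L + 1 := by
        have := lev_edge hroot hd hEab
        omega
      have htr := transfer hroot hd h1 H1 hEac hEab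
      have hsub : {z | z ∈ desc E a ∧ z ≠ a} ⊆ SL hroot (L + 1) := by
        have := desc_ne_subset_SL hroot hd (E := E) a
        rwa [hlevL] at this
      exact JoinedG_trans (JoinedG_mono hsub htr) (ih b (Or.inl ⟨le_of_eq hlevb.symm, rfl⟩))

lemma surgery (hroot : Rooted E α)
    (hd : ∀ s t : ℕ, s ≠ t → Disjoint (descN E s α) (descN E t α))
    (h1 : P1 E)
    (H1 : ∀ u v : V, E α u → E α v → JoinedG E {z : V | z ≠ α} u v)
    {x y : V} (h : JoinedG E (SL hroot 1) x y) :
    ∀ L : ℕ, 1 ≤ L → L ≤ levF hroot x → L ≤ levF hroot y → JoinedG E (SL hroot L) x y := by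
  intro L
  induction L with
  | zero => omega
  | succ L ih =>
    intro _ hx hy
    rcases Nat.eq_zero_or_pos L with rfl | hL
    · exact h
    · have hprev := ih hL (by omega) (by omega)
      exact surgery_step hroot hd h1 H1 L hprev hy x (Or.inl ⟨hx, rfl⟩)

end BlockAux

/-- a block system on the first level with at least two blocks and
pairwise disjoint descendant sets. -/
theorem block_system_first_level (E : V → V → Prop) (α : V) (m : ℕ)
    (hroot : Rooted E α) (h0 : P0 E α m) (h1 : P1 E) (h2 : P2 E α) (h3 : P3 E α) :
    ∃ Ω : Set (Set V),
      (∀ ω ∈ Ω, ω.Nonempty) ∧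
      (⋃₀ Ω = descN E 1 α) ∧
      (∀ ω ∈ Ω, ∀ ω' ∈ Ω, ω ≠ ω' → Disjoint ω ω') ∧
      (∀ g : Equiv.Perm V, IsAut E g → g α = α → ∀ ω ∈ Ω, (g '' ω) ∈ Ω) ∧
      2 ≤ Ω.ncard ∧
      (∀ ω ∈ Ω, ∀ ω' ∈ Ω, ω ≠ ω' → Disjoint (descSet E ω) (descSet E ω')) := by
  classical
  obtain ⟨hm, hout, hd⟩ := h0
  have hUfin : ∀ x : V, (Uset E α x).Finite := fun x => ((hout α).1).subset (fun u hu => hu.1)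
  have hne : ∀ x : V, ∃ y, E x y := by
    intro x
    have hnon : (outSet E x).Nonempty :=
      Set.nonempty_of_ncard_ne_zero (by rw [(hout x).2]; omega)
    obtain ⟨y, hy⟩ := hnon
    exact ⟨y, hy⟩
  have hmem1 : ∀ v : V, E α v ↔ v ∈ descN E 1 α := by
    intro v
    constructor
    · intro h
      exact ⟨v, h, rfl⟩
    · rintro ⟨z, hz, hz2⟩
      have hzz : z = v := hz2
      rwa [hzz] at hz
  have hlev1 : ∀ v : V, E α v → levF hroot v = 1 := by
    intro v hv
    rw [lev_edge hroot hd hv, (lev_zero_iff hroot hd).2 rfl]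
  have hne_a : ∀ t : V, E α t → t ≠ α := by
    intro t ht h
    have h2' := hlev1 t ht
    rw [h, (lev_zero_iff hroot hd).2 rfl] at h2'
    omega
  have harcJ : ∀ {x y : V}, x ≠ α → ∀ {n : ℕ}, arcOf E n x y →
      JoinedG E {z : V | z ≠ α} x y := by
    intro x y hx n harc
    have h1le : 1 ≤ levF hroot x := by
      have : levF hroot x ≠ 0 := fun h => hx ((lev_zero_iff hroot hd).1 h)
      omega
    have := joined_of_arc hroot hd harc h1le
    rwa [SL_one_eq hroot hd] at this
  have key : ∃ u, E α u ∧ ∃ v, E α v ∧ ¬ JoinedG E {z : V | z ≠ α} u v := by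
    by_contra hcon
    push_neg at hcon
    choose nxt hnxt using hne
    set c : ℕ → V := fun n => Nat.rec α (fun _ x => nxt x) n with hcdef
    have hcE : ∀ n, E (c n) (c (n + 1)) := fun n => hnxt (c n)
    have hclev : ∀ n, levF hroot (c n) = n := by
      intro n
      induction n with
      | zero => exact (lev_zero_iff hroot hd).2 rfl
      | succ n ih => rw [lev_edge hroot hd (hcE n), ih]
    have hcmem : ∀ n, c n ∈ descN E n α := by
      intro n
      have := lev_spec hroot (c n)
      rwa [hclev n] at this
    set μ : ℕ → ℕ := fun L => (Uset E α (c L)).ncard with hμdef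
    have hμmono : Monotone μ := monotone_nat_of_le_succ (fun n =>
      Set.ncard_le_ncard (Uset_mono (hcE n)) (hUfin _))
    have hμbdd : ∀ L, μ L ≤ m := by
      intro L
      rw [← (hout α).2]
      exact Set.ncard_le_ncard (fun u hu => hu.1) (hout α).1
    have hbdd : BddAbove (Set.range μ) := ⟨m, by rintro _ ⟨L, rfl⟩; exact hμbdd L⟩
    obtain ⟨N, hN⟩ := Nat.sSup_mem (Set.range_nonempty μ) hbdd
    set i₀ := max N 1 with hi₀def
    have hi₀1 : 1 ≤ i₀ := le_max_right _ _
    have hstab : ∀ K, i₀ ≤ K → μ K = μ i₀ := by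
      intro K hK
      have h1' : μ K ≤ sSup (Set.range μ) := le_csSup hbdd ⟨K, rfl⟩
      have h4' : μ K ≤ μ N := by rw [hN]; exact h1'
      have h2' : μ i₀ ≤ μ K := hμmono hK
      have h3' : μ N ≤ μ i₀ := hμmono (le_max_left _ _)
      omega
    have hcard : ∀ y : V, (Uset E α y).ncard = μ (levF hroot y) := by
      intro y
      set L := levF hroot y with hL
      show (Uset E α y).ncard = (Uset E α (c L)).ncard
      obtain ⟨g, hg, hgα, hgy⟩ := h2 L (c L) (hcmem L) y (by rw [hL]; exact lev_spec hroot y)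
      rw [← hgy, ← Uset_aut hg hgα, Set.ncard_image_of_injective _ g.injective]
    have hUedge : ∀ a b : V, E a b → i₀ ≤ levF hroot a → Uset E α a = Uset E α b := by
      intro a b hE hla
      refine Set.eq_of_subset_of_ncard_le (Uset_mono hE) ?_ (hUfin b)
      rw [hcard a, hcard b, lev_edge hroot hd hE,
        hstab (levF hroot a + 1) (by omega), hstab (levF hroot a) hla]
    have hUjoined : ∀ a b : V, JoinedG E (SL hroot i₀) a b → Uset E α a = Uset E α b := by
      intro a b h
      induction h with
      | refl => rfl
      | tail hab hbc ih =>
        obtain ⟨hor, hm1, hm2⟩ := hbc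
        rcases hor with h' | h'
        · exact ih.trans (hUedge _ _ h' hm1)
        · exact ih.trans (hUedge _ _ h' hm2).symm
    have hkey2 : ∀ x' : V, levF hroot x' = i₀ → Uset E α x' = Uset E α (c i₀) := by
      intro x' hx'
      have hx'arc : arcOf E i₀ α x' := by
        have := lev_spec hroot x'
        rwa [hx'] at this
      obtain ⟨j, hj⟩ : ∃ j, i₀ = j + 1 := ⟨i₀ - 1, by omega⟩
      rw [hj] at hx'arc
      obtain ⟨z, hαz, hzx'⟩ := hx'arc
      have j1 : JoinedG E {t : V | t ≠ α} z x' := harcJ (hne_a z hαz) hzx'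
      have hc1 : E α (c 1) := hcE 0
      have j2 := hcon z hαz (c 1) hc1
      have jc : arcOf E j (c 1) (c i₀) := by
        have harc : ∀ a b : ℕ, arcOf E b (c a) (c (a + b)) := by
          intro a b
          induction b with
          | zero => rfl
          | succ b ih => exact arcOf_snoc.mpr ⟨c (a + b), ih, hcE (a + b)⟩
        have := harc 1 j
        rwa [show 1 + j = i₀ from by omega] at this
      have j3 : JoinedG E {t : V | t ≠ α} (c 1) (c i₀) := harcJ (hne_a _ hc1) jc
      have jj : JoinedG E {t : V | t ≠ α} x' (c i₀) :=
        JoinedG_trans (JoinedG_symm j1) (JoinedG_trans j2 j3)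
      have jj1 : JoinedG E (SL hroot 1) x' (c i₀) := by
        rw [SL_one_eq hroot hd]
        exact jj
      have jdeep := surgery hroot hd h1 (fun u v hu hv => hcon u hu v hv) jj1 i₀ hi₀1
        (le_of_eq hx'.symm) (le_of_eq (hclev i₀).symm)
      exact hUjoined _ _ jdeep
    have hall : ∀ u : V, E α u → u ∈ Uset E α (c i₀) := by
      intro u hu
      obtain ⟨xu, hxu⟩ := exists_arc (fun x => ⟨nxt x, hnxt x⟩) (i₀ - 1) u
      have hlevu : levF hroot u = 1 := hlev1 u hu
      have hlevxu : levF hroot xu = i₀ := by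
        rw [lev_desc hroot hd hxu, hlevu]
        omega
      have hmem : u ∈ Uset E α xu := ⟨hu, i₀ - 1, hxu⟩
      rwa [hkey2 xu hlevxu] at hmem
    have hc1 : E α (c 1) := hcE 0
    have hsub2 : descN E i₀ α ⊆ descN E (i₀ - 1) (c 1) := by
      intro x' hx'
      have hlev : levF hroot x' = i₀ := (lev_eq hroot hd hx').symm
      have hmem : c 1 ∈ Uset E α x' := by
        rw [hkey2 x' hlev]
        exact hall _ hc1
      obtain ⟨_, d, hdx⟩ := hmem
      have hld : levF hroot x' = 1 + d := by
        rw [lev_desc hroot hd hdx, hclev 1]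
      have hdeq : d = i₀ - 1 := by omega
      rw [← hdeq]
      exact hdx
    have hfin : (descN E (i₀ - 1) (c 1)).Finite := by
      apply (level_finite hout i₀).subset
      intro t ht
      have harc1 : arcOf E 1 α (c 1) := ⟨c 1, hc1, rfl⟩
      have := arcOf_trans harc1 ht
      rwa [show 1 + (i₀ - 1) = i₀ from by omega] at this
    have hle2 : (descN E i₀ α).ncard ≤ (descN E (i₀ - 1) (c 1)).ncard :=
      Set.ncard_le_ncard hsub2 hfin
    have heq2 : (descN E (i₀ - 1) (c 1)).ncard = (descN E (i₀ - 1) α).ncard :=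
      ncard_descN_eq hroot hd h1 (c 1) (i₀ - 1)
    have hlt := h3 (i₀ - 1)
    rw [show i₀ - 1 + 1 = i₀ from by omega] at hlt
    omega
  obtain ⟨u0, hu0, v0, hv0, hnj⟩ := key
  refine ⟨{S : Set V | ∃ u, E α u ∧ S = omegaB E α u}, ?_, ?_, ?_, ?_, ?_, ?_⟩
  · rintro ω ⟨u, hu, rfl⟩
    exact ⟨u, hu, Relation.ReflTransGen.refl⟩
  · ext v
    constructor
    · rintro ⟨ω, ⟨u, hu, rfl⟩, hv⟩
      exact (hmem1 v).1 hv.1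
    · intro hv
      have hv' : E α v := (hmem1 v).2 hv
      exact ⟨omegaB E α v, ⟨v, hv', rfl⟩, hv', Relation.ReflTransGen.refl⟩
  · rintro ω ⟨u, hu, rfl⟩ ω' ⟨u', hu', rfl⟩ hne'
    rw [Set.disjoint_left]
    intro z hz hz'
    exact hne' (omega_eq_of_joined (JoinedG_trans hz.2 (JoinedG_symm hz'.2)))
  · rintro g hg hgα ω ⟨u, hu, rfl⟩
    refine ⟨g u, ?_, ?_⟩
    · have := (hg α u).1 hu
      rwa [hgα] at this
    · ext w
      constructor
      · rintro ⟨v, ⟨hαv, hJ⟩, rfl⟩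
        refine ⟨?_, JoinedG_aut hg hgα hJ⟩
        have := (hg α v).1 hαv
        rwa [hgα] at this
      · rintro ⟨hαw, hJ⟩
        refine ⟨g.symm w, ⟨?_, ?_⟩, g.apply_symm_apply w⟩
        · have := (isAut_symm hg α w).1 hαw
          rwa [show g.symm α = α from (Equiv.symm_apply_eq g).2 hgα.symm] at this
        · have := JoinedG_aut (isAut_symm hg) ((Equiv.symm_apply_eq g).2 hgα.symm) hJ
          rwa [Equiv.symm_apply_apply] at this
  · have hΩfin : {S : Set V | ∃ u, E α u ∧ S = omegaB E α u}.Finite := by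
      have hsub : {S : Set V | ∃ u, E α u ∧ S = omegaB E α u} ⊆
          (omegaB E α) '' (outSet E α) := by
        rintro S ⟨u, hu, rfl⟩
        exact ⟨u, hu, rfl⟩
      exact (((hout α).1).image _).subset hsub
    have hlt2 : 1 < {S : Set V | ∃ u, E α u ∧ S = omegaB E α u}.ncard := by
      rw [Set.one_lt_ncard_iff hΩfin]
      refine ⟨omegaB E α u0, omegaB E α v0, ⟨u0, hu0, rfl⟩, ⟨v0, hv0, rfl⟩, ?_⟩
      intro hEq
      have hv0' : v0 ∈ omegaB E α u0 := by
        rw [hEq]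
        exact ⟨hv0, Relation.ReflTransGen.refl⟩
      exact hnj hv0'.2
    omega
  · rintro ω ⟨u, hu, rfl⟩ ω' ⟨u', hu', rfl⟩ hne'
    rw [Set.disjoint_left]
    intro x hx hx'
    simp only [descSet, Set.mem_iUnion] at hx hx'
    obtain ⟨a, ha, hxa⟩ := hx
    obtain ⟨a', ha', hxa'⟩ := hx'
    obtain ⟨n, hn⟩ := hxa
    obtain ⟨n', hn'⟩ := hxa'
    have jax : JoinedG E {z : V | z ≠ α} a x := harcJ (hne_a a ha.1) hn
    have jax' : JoinedG E {z : V | z ≠ α} a' x := harcJ (hne_a a' ha'.1) hn'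
    have juu' : JoinedG E {z : V | z ≠ α} u u' :=
      JoinedG_trans ha.2 (JoinedG_trans jax (JoinedG_trans (JoinedG_symm jax') (JoinedG_symm ha'.2)))
    exact hne' (omega_eq_of_joined juu')
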